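/- In the SFBF setup, let σ̂(x*) := max{σ(x*), σ₀} for x* ∈ 𝒳_*, and dist(x, 𝒳_*) := ‖Π_{𝒳_*}(x) − x‖. Then for every n ≥ 0, P-almost surely E[dist(X_{n+1}, 𝒳_*)² | F_n] ≤ dist(X_n, 𝒳_*)² − (ρ_n/2)·r_{α_n}(X_n)² + (κ_n σ̂(Π_{𝒳_*}(X_n))²/m_{n+1})·(1 + dist(X_n, 𝒳_*)²), where ρ_n = 1 − 2L²α_n² and κ_n = α_n² C₂² [2(4+ρ_n) + 16(1 + α_n L + α_n σ₀ C₂/√(m_{n+1}))²]. -/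

import Mathlib

open MeasureTheory
open scoped RealInnerProductSpace ENNReal

set_option maxHeartbeats 1600000



section ProjAux

variable {E : Type*} [NormedAddCommGroup E] [InnerProductSpace ℝ E]

/-- Nonexpansiveness of a map satisfying the variational characterization of projections. -/
lemma proj_nonexpansive' {S : Set E} {Q : E → E}
    (hmem : ∀ x, Q x ∈ S) (hchar : ∀ x, ∀ y ∈ S, ⟪x - Q x, y - Q x⟫ ≤ 0) :
    ∀ u v, ‖Q u - Q v‖ ≤ ‖u - v‖ := by
  intro u v
  have h1 := hchar u (Q v) (hmem v)
  have h2 := hchar v (Q u) (hmem u)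
  have key : ‖Q u - Q v‖ ^ 2 ≤ ⟪u - v, Q u - Q v⟫ := by
    have e1 : ⟪u - Q u, Q v - Q u⟫ + ⟪v - Q v, Q u - Q v⟫ ≤ 0 := by linarith
    have e2 : ⟪u - Q u, Q v - Q u⟫ = -⟪u - Q u, Q u - Q v⟫ := by
      rw [show Q v - Q u = -(Q u - Q v) by abel, inner_neg_right]
    have e3 : ⟪u - Q u, Q u - Q v⟫ = ⟪u, Q u - Q v⟫ - ⟪Q u, Q u - Q v⟫ := inner_sub_left _ _ _
    have e4 : ⟪v - Q v, Q u - Q v⟫ = ⟪v, Q u - Q v⟫ - ⟪Q v, Q u - Q v⟫ := inner_sub_left _ _ _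
    have e5 : ⟪u - v, Q u - Q v⟫ = ⟪u, Q u - Q v⟫ - ⟪v, Q u - Q v⟫ := inner_sub_left _ _ _
    have e6 : ⟪Q u - Q v, Q u - Q v⟫ = ⟪Q u, Q u - Q v⟫ - ⟪Q v, Q u - Q v⟫ := inner_sub_left _ _ _
    have e7 : ⟪Q u - Q v, Q u - Q v⟫ = ‖Q u - Q v‖ ^ 2 := real_inner_self_eq_norm_sq _
    linarith
  have cs : ⟪u - v, Q u - Q v⟫ ≤ ‖u - v‖ * ‖Q u - Q v‖ := real_inner_le_norm _ _
  nlinarith [norm_nonneg (Q u - Q v), norm_nonneg (u - v)]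

/-- Uniqueness: a point satisfying the characterization is the projection. -/
lemma proj_unique' {S : Set E} {Q : E → E}
    (hmem : ∀ x, Q x ∈ S) (hchar : ∀ x, ∀ y ∈ S, ⟪x - Q x, y - Q x⟫ ≤ 0)
    {w z : E} (hz : z ∈ S) (hzchar : ∀ y ∈ S, ⟪w - z, y - z⟫ ≤ 0) : Q w = z := by
  have h1 := hchar w z hz
  have h2 := hzchar (Q w) (hmem w)
  have e : ‖z - Q w‖ ^ 2 ≤ 0 := by
    have e1 : ⟪w - Q w, z - Q w⟫ + ⟪w - z, Q w - z⟫ ≤ 0 := by linarith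
    have e2 : ⟪w - z, Q w - z⟫ = -⟪w - z, z - Q w⟫ := by
      rw [show Q w - z = -(z - Q w) by abel, inner_neg_right]
    have e3 : ⟪w - Q w, z - Q w⟫ - ⟪w - z, z - Q w⟫ = ⟪z - Q w, z - Q w⟫ := by
      rw [← inner_sub_left]; congr 1; abel
    have e4 : ⟪z - Q w, z - Q w⟫ = ‖z - Q w‖ ^ 2 := real_inner_self_eq_norm_sq _
    linarith
  have : z - Q w = 0 := by
    have := sq_nonneg ‖z - Q w‖
    have hn : ‖z - Q w‖ = 0 := by nlinarith
    exact norm_eq_zero.mp hn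
  have := sub_eq_zero.mp this
  exact this.symm

/-- The fixed point / distance property: Q z is the closest point of S. -/
lemma proj_dist_le' {S : Set E} {Q : E → E}
    (hmem : ∀ x, Q x ∈ S) (hchar : ∀ x, ∀ y ∈ S, ⟪x - Q x, y - Q x⟫ ≤ 0) :
    ∀ z, ∀ y ∈ S, ‖Q z - z‖ ≤ ‖z - y‖ := by
  intro z y hy
  have h1 := hchar z y hy
  have key : ‖z - y‖ ^ 2 = ‖z - Q z‖ ^ 2 - 2 * ⟪z - Q z, y - Q z⟫ + ‖Q z - y‖ ^ 2 := by
    have : z - y = (z - Q z) - (y - Q z) := by abel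
    rw [this, norm_sub_sq_real, norm_sub_rev (Q z) y]
  have h2 : ‖z - Q z‖ ^ 2 ≤ ‖z - y‖ ^ 2 := by nlinarith [sq_nonneg ‖Q z - y‖]
  have h3 : ‖Q z - z‖ = ‖z - Q z‖ := norm_sub_rev _ _
  rw [h3]
  have := norm_nonneg (z - Q z); have := norm_nonneg (z - y)
  nlinarith

end ProjAux


section DetAux

variable {E : Type*} [NormedAddCommGroup E] [InnerProductSpace ℝ E]

/-- Deterministic one-step FBF estimate. Here `y = proj (x - a • Av)` and the next iterate is
`y + a • (Av - Bv)`; `W, Z` are the oracle errors. -/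
lemma det_key' {𝒳 : Set E} {proj : E → E}
    (hproj_char : ∀ x, ∀ y ∈ 𝒳, ⟪x - proj x, y - proj x⟫ ≤ 0)
    (T : E → E) (L a : ℝ) (ha : 0 ≤ a)
    (hLip : ∀ x y, ‖T x - T y‖ ≤ L * ‖x - y‖)
    (x xs Av Bv : E) (hxs𝒳 : xs ∈ 𝒳)
    (hTY : ⟪T (proj (x - a • Av)), xs - proj (x - a • Av)⟫ ≤ 0) :
    ‖(proj (x - a • Av) + a • (Av - Bv)) - xs‖ ^ 2 ≤
      ‖x - xs‖ ^ 2 - (1 - 2 * L ^ 2 * a ^ 2) * ‖x - proj (x - a • Av)‖ ^ 2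
        + 2 * a * ⟪Bv - T (proj (x - a • Av)), xs - proj (x - a • Av)⟫
        + 4 * a ^ 2 * ‖Av - T x‖ ^ 2 + 4 * a ^ 2 * ‖Bv - T (proj (x - a • Av))‖ ^ 2 := by
  set y := proj (x - a • Av) with hy
  set W := Av - T x with hW
  set Z := Bv - T y with hZ
  -- e1 : ‖y - xs‖² = ‖x - xs‖² - ‖x - y‖² - 2⟪x - y, y - xs⟫
  have e1 : ‖y - xs‖ ^ 2 = ‖x - xs‖ ^ 2 - ‖x - y‖ ^ 2 - 2 * ⟪x - y, y - xs⟫ := by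
    have h1 : ‖y - xs‖ ^ 2 = ‖x - xs‖ ^ 2 - 2 * ⟪x - xs, x - y⟫ + ‖x - y‖ ^ 2 := by
      conv_lhs => rw [show y - xs = (x - xs) - (x - y) by abel]
      exact norm_sub_sq_real _ _
    have h2 : ⟪x - xs, x - y⟫ = ‖x - y‖ ^ 2 + ⟪x - y, y - xs⟫ := by
      rw [show x - xs = (x - y) + (y - xs) by abel, inner_add_left,
        real_inner_self_eq_norm_sq, real_inner_comm (y - xs)]
    linarith
  -- e3 : expansion of the next iterate
  have e3 : ‖(y + a • (Av - Bv)) - xs‖ ^ 2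
      = ‖y - xs‖ ^ 2 + 2 * a * ⟪Av - Bv, y - xs⟫ + a ^ 2 * ‖Av - Bv‖ ^ 2 := by
    have h1 : (y + a • (Av - Bv)) - xs = (y - xs) + a • (Av - Bv) := by abel
    rw [h1, norm_add_sq_real, real_inner_smul_right, norm_smul, Real.norm_eq_abs,
      mul_pow, sq_abs, real_inner_comm]
    ring
  -- e2 : projection characterization
  have e2 : ⟪x - y, xs - y⟫ ≤ a * ⟪Av, xs - y⟫ := by
    have h0 := hproj_char (x - a • Av) xs hxs𝒳
    rw [← hy] at h0
    have h1 : (x - a • Av) - y = (x - y) - a • Av := by abel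
    rw [h1, inner_sub_left, real_inner_smul_left] at h0
    linarith
  -- switching signs
  have e4 : ⟪x - y, y - xs⟫ = -⟪x - y, xs - y⟫ := by
    rw [show y - xs = -(xs - y) by abel, inner_neg_right]
  have e5 : ⟪Av - Bv, y - xs⟫ = -⟪Av, xs - y⟫ + ⟪Bv, xs - y⟫ := by
    rw [show y - xs = -(xs - y) by abel, inner_neg_right, inner_sub_left]; ring
  have e6 : ⟪Bv, xs - y⟫ = ⟪Z, xs - y⟫ + ⟪T y, xs - y⟫ := by
    rw [hZ, inner_sub_left]; ring
  -- e7 : norm of the difference of the oracle values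
  have e7 : ‖Av - Bv‖ ^ 2 ≤ 2 * L ^ 2 * ‖x - y‖ ^ 2 + 4 * ‖W‖ ^ 2 + 4 * ‖Z‖ ^ 2 := by
    have h1 : Av - Bv = (T x - T y) + (W - Z) := by rw [hW, hZ]; abel
    have h2 : ‖Av - Bv‖ ≤ ‖T x - T y‖ + ‖W‖ + ‖Z‖ := by
      rw [h1]
      refine (norm_add_le _ _).trans ?_
      have := norm_sub_le W Z
      linarith
    have h3 : ‖T x - T y‖ ≤ L * ‖x - y‖ := hLip x y
    have hL0 : 0 ≤ L * ‖x - y‖ := le_trans (norm_nonneg _) h3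
    nlinarith [norm_nonneg (Av - Bv), norm_nonneg W, norm_nonneg Z, norm_nonneg (T x - T y),
      sq_nonneg (‖W‖ - ‖Z‖), sq_nonneg (L * ‖x - y‖ - ‖W‖ - ‖Z‖)]
  have ha2 : (0:ℝ) ≤ a ^ 2 := sq_nonneg a
  have e2' : 2 * a * ⟪x - y, xs - y⟫ ≤ 2 * a * (a * ⟪Av, xs - y⟫) := by
    have h2a : (0:ℝ) ≤ 2 * a := by linarith
    exact mul_le_mul_of_nonneg_left e2 h2a
  have e7' : a ^ 2 * ‖Av - Bv‖ ^ 2 ≤ a ^ 2 * (2 * L ^ 2 * ‖x - y‖ ^ 2 + 4 * ‖W‖ ^ 2 + 4 * ‖Z‖ ^ 2) :=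
    mul_le_mul_of_nonneg_left e7 ha2
  have hTY' : 2 * a * ⟪T y, xs - y⟫ ≤ 0 := by
    have h2a : (0:ℝ) ≤ 2 * a := by linarith
    exact mul_nonpos_of_nonneg_of_nonpos h2a hTY
  calc ‖(y + a • (Av - Bv)) - xs‖ ^ 2
      = ‖y - xs‖ ^ 2 + 2 * a * ⟪Av - Bv, y - xs⟫ + a ^ 2 * ‖Av - Bv‖ ^ 2 := e3
    _ ≤ ‖x - xs‖ ^ 2 - (1 - 2 * L ^ 2 * a ^ 2) * ‖x - y‖ ^ 2
        + 2 * a * ⟪Z, xs - y⟫ + 4 * a ^ 2 * ‖W‖ ^ 2 + 4 * a ^ 2 * ‖Z‖ ^ 2 := by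
        rw [e1, e4, e5, e6] at *
        nlinarith [e2', e7', hTY']

end DetAux


section Envelope

variable {Ω : Type*} [MeasurableSpace Ω] {μ : Measure Ω}
variable {E : Type*} [NormedAddCommGroup E] [TopologicalSpace.SeparableSpace E]

/-- Measurable/continuous envelope extraction: from a family of a.e. bounds indexed by points of
`S`, produce a continuous (Lipschitz) envelope `θ ≤ σf` on `S` such that the bound holds a.e.
simultaneously for all points of `S`. -/
lemma envelope_bound (S : Set E) {x₀ : E} (hx₀ : x₀ ∈ S)
    (σf : E → ℝ) (hσf : ∀ xs ∈ S, 0 ≤ σf xs)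
    (h : Ω → ℝ) (K : Ω → E) {b : ℝ} (hb : 0 ≤ b)
    (hyp : ∀ xs ∈ S, ∀ᵐ ω ∂μ, h ω ≤ σf xs + b * ‖K ω - xs‖) :
    ∃ θ : E → ℝ, Continuous θ ∧ (∀ x, 0 ≤ θ x) ∧ (∀ xs ∈ S, θ xs ≤ σf xs) ∧
      (∀ x y, θ x ≤ θ y + b * ‖x - y‖) ∧
      (∀ᵐ ω ∂μ, ∀ x ∈ S, h ω ≤ θ x + b * ‖K ω - x‖) := by
  classical
  set θ' : E → ℝ≥0∞ := fun x => essSup (fun ω => ENNReal.ofReal (h ω - b * ‖K ω - x‖)) μ with hθ'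
  have mono' : ∀ x y : E, θ' x ≤ θ' y + ENNReal.ofReal (b * ‖x - y‖) := by
    intro x y
    refine essSup_le_of_ae_le _ ?_
    filter_upwards [ENNReal.ae_le_essSup (fun ω => ENNReal.ofReal (h ω - b * ‖K ω - y‖))]
      with ω hω
    have hr : h ω - b * ‖K ω - x‖ ≤ (h ω - b * ‖K ω - y‖) + b * ‖x - y‖ := by
      have ht : ‖K ω - y‖ ≤ ‖K ω - x‖ + ‖x - y‖ := by
        have : K ω - y = (K ω - x) + (x - y) := by abel
        rw [this]; exact norm_add_le _ _
      nlinarith [mul_le_mul_of_nonneg_left ht hb]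
    calc ENNReal.ofReal (h ω - b * ‖K ω - x‖)
        ≤ ENNReal.ofReal ((h ω - b * ‖K ω - y‖) + b * ‖x - y‖) := ENNReal.ofReal_le_ofReal hr
      _ ≤ ENNReal.ofReal (h ω - b * ‖K ω - y‖) + ENNReal.ofReal (b * ‖x - y‖) :=
          ENNReal.ofReal_add_le
      _ ≤ essSup (fun ω => ENNReal.ofReal (h ω - b * ‖K ω - y‖)) μ
            + ENNReal.ofReal (b * ‖x - y‖) := by gcongr
  have bdd : ∀ xs ∈ S, θ' xs ≤ ENNReal.ofReal (σf xs) := by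
    intro xs hxs
    refine essSup_le_of_ae_le _ ?_
    filter_upwards [hyp xs hxs] with ω hω
    exact ENNReal.ofReal_le_ofReal (by linarith)
  have fin : ∀ x, θ' x ≠ ∞ := by
    intro x
    have h1 : θ' x ≤ ENNReal.ofReal (σf x₀) + ENNReal.ofReal (b * ‖x - x₀‖) :=
      le_trans (mono' x x₀) (add_le_add (bdd x₀ hx₀) le_rfl)
    exact ne_top_of_le_ne_top (by simp [ENNReal.add_ne_top]) h1
  set θ : E → ℝ := fun x => max 0 (θ' x).toReal with hθ
  have lipR : ∀ x y : E, (θ' x).toReal ≤ (θ' y).toReal + b * ‖x - y‖ := by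
    intro x y
    have h1 := mono' x y
    have h2 : (θ' y + ENNReal.ofReal (b * ‖x - y‖)).toReal
        = (θ' y).toReal + b * ‖x - y‖ := by
      rw [ENNReal.toReal_add (fin y) ENNReal.ofReal_ne_top,
        ENNReal.toReal_ofReal (by positivity)]
    calc (θ' x).toReal ≤ (θ' y + ENNReal.ofReal (b * ‖x - y‖)).toReal :=
          ENNReal.toReal_mono (by simp [fin y, ENNReal.add_ne_top]) h1
      _ = (θ' y).toReal + b * ‖x - y‖ := h2
  have lip : ∀ x y : E, θ x ≤ θ y + b * ‖x - y‖ := by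
    intro x y
    have hbn : 0 ≤ b * ‖x - y‖ := by positivity
    rcases le_or_gt (θ' x).toReal 0 with hc | hc
    · simp only [hθ]
      have : max 0 (θ' x).toReal = 0 := max_eq_left hc
      rw [this]
      have : (0:ℝ) ≤ max 0 (θ' y).toReal := le_max_left _ _
      linarith
    · simp only [hθ]
      rw [max_eq_right hc.le]
      have := lipR x y
      have : (θ' y).toReal ≤ max 0 (θ' y).toReal := le_max_right _ _
      linarith [lipR x y]
  have cont : Continuous θ := by
    rcases eq_or_lt_of_le hb with hb0 | hb0
    · have : ∀ x, θ x = θ x₀ := by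
        intro x
        have h1 := lip x x₀
        have h2 := lip x₀ x
        rw [← hb0] at h1 h2
        simp at h1 h2
        linarith
      have hfe : θ = fun _ => θ x₀ := funext this
      rw [hfe]; exact continuous_const
    · refine (LipschitzWith.of_dist_le_mul (K := ⟨b, hb⟩) ?_).continuous
      intro x y
      have h1 := lip x y
      have h2 := lip y x
      rw [Real.dist_eq, abs_le, dist_eq_norm]
      constructor
      · have : ‖y - x‖ = ‖x - y‖ := norm_sub_rev _ _
        change -(b * _) ≤ _
        nlinarith [lip y x, norm_sub_rev x y]
      · change _ ≤ b * _
        linarith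
  have θle : ∀ xs ∈ S, θ xs ≤ σf xs := by
    intro xs hxs
    have h1 : (θ' xs).toReal ≤ σf xs := by
      have := ENNReal.toReal_mono ENNReal.ofReal_ne_top (bdd xs hxs)
      rwa [ENNReal.toReal_ofReal (hσf xs hxs)] at this
    exact max_le (hσf xs hxs) h1
  have θ0 : ∀ x, 0 ≤ θ x := fun x => le_max_left _ _
  -- countable dense approximation
  obtain ⟨D, hDc, hSD⟩ := (TopologicalSpace.IsSeparable.of_separableSpace S)
  have aeD : ∀ᵐ ω ∂μ, ∀ xs ∈ D,
      ENNReal.ofReal (h ω - b * ‖K ω - xs‖) ≤ θ' xs :=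
    (ae_ball_iff hDc).mpr fun xs _ => ENNReal.ae_le_essSup _
  refine ⟨θ, cont, θ0, θle, lip, ?_⟩
  filter_upwards [aeD] with ω hω x hxS
  refine le_of_forall_pos_le_add ?_
  intro ε hε
  have hεb : 0 < ε / (2 * b + 1) := by positivity
  obtain ⟨xs, hxsD, hdist⟩ := Metric.mem_closure_iff.mp (hSD hxS) _ hεb
  rw [dist_eq_norm] at hdist
  have key1 : h ω - b * ‖K ω - xs‖ ≤ (θ' xs).toReal :=
    (ENNReal.ofReal_le_iff_le_toReal (fin xs)).mp (hω xs hxsD)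
  have key2 : (θ' xs).toReal ≤ θ xs := le_max_right _ _
  have key3 : θ xs ≤ θ x + b * ‖xs - x‖ := lip xs x
  have key4 : ‖K ω - x‖ ≤ ‖K ω - xs‖ + ‖xs - x‖ := by
    have : K ω - x = (K ω - xs) + (xs - x) := by abel
    rw [this]; exact norm_add_le _ _
  have key5 : ‖xs - x‖ ≤ ε / (2 * b + 1) := by
    rw [norm_sub_rev]; exact hdist.le
  have key6 : ‖K ω - xs‖ ≤ ‖K ω - x‖ + ‖xs - x‖ := by
    have h7 : ‖K ω - xs‖ ≤ ‖K ω - x‖ + ‖x - xs‖ := by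
      have he : K ω - xs = (K ω - x) + (x - xs) := by abel
      rw [he]; exact norm_add_le _ _
    have h8 : ‖x - xs‖ = ‖xs - x‖ := norm_sub_rev _ _
    linarith
  have hb2 : 2 * b * (ε / (2 * b + 1)) ≤ ε := by
    have h1 : ε / (2 * b + 1) * (2 * b) ≤ ε := by
      rw [div_mul_eq_mul_div, div_le_iff₀ (by linarith : (0:ℝ) < 2 * b + 1)]
      nlinarith
    linarith [h1, mul_comm (2 * b) (ε / (2 * b + 1))]
  nlinarith [mul_le_mul_of_nonneg_left key5 hb, mul_le_mul_of_nonneg_left key6 hb]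

end Envelope

section CondexpHelpers

variable {Ω : Type*} [m0 : MeasurableSpace Ω] (μ : MeasureTheory.Measure Ω)

lemma condexp_add_apply (m : MeasurableSpace Ω) {f g : Ω → ℝ}
    (hf : Integrable f μ) (hg : Integrable g μ) :
    condExp m μ (fun ω => f ω + g ω) =ᵐ[μ] fun ω => condExp m μ f ω + condExp m μ g ω := by
  have h1 : (fun ω => f ω + g ω) = f + g := rfl
  rw [h1]
  filter_upwards [condExp_add hf hg m] with ω hω using hω

lemma condexp_const_mul_apply (m : MeasurableSpace Ω) (k : ℝ) (f : Ω → ℝ) :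
    condExp m μ (fun ω => k * f ω) =ᵐ[μ] fun ω => k * condExp m μ f ω := by
  have h1 : (fun ω => k * f ω) = k • f := rfl
  rw [h1]
  filter_upwards [condExp_smul (m := m) (μ := μ) k f] with ω hω
  simpa using hω

end CondexpHelpers

section CondexpHelpers2

variable {Ω : Type*} [m0 : MeasurableSpace Ω] (μ : MeasureTheory.Measure Ω)

lemma condexp_comb4 (m : MeasurableSpace Ω) {f1 f2 f3 f4 : Ω → ℝ}
    (h1 : Integrable f1 μ) (h2 : Integrable f2 μ) (h3 : Integrable f3 μ)
    (h4 : Integrable f4 μ) :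
    condExp m μ (fun ω => f1 ω + f2 ω + f3 ω + f4 ω) =ᵐ[μ]
      fun ω => condExp m μ f1 ω + condExp m μ f2 ω + condExp m μ f3 ω + condExp m μ f4 ω := by
  exact (condExp_add ((h1.add h2).add h3) h4 m).trans
    (((condExp_add (h1.add h2) h3 m).trans
      ((condExp_add h1 h2 m).add (Filter.EventuallyEq.refl _ _))).add
        (Filter.EventuallyEq.refl _ _))

end CondexpHelpers2

lemma coord_abs_le_norm {d : ℕ} (x : EuclideanSpace ℝ (Fin d)) (i : Fin d) : |x i| ≤ ‖x‖ := by
  rw [EuclideanSpace.norm_eq, ← Real.sqrt_sq_eq_abs]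
  refine Real.sqrt_le_sqrt ?_
  calc (x i) ^ 2 = ‖x i‖ ^ 2 := by rw [Real.norm_eq_abs, sq_abs]
    _ ≤ ∑ j, ‖x j‖ ^ 2 :=
        Finset.single_le_sum (f := fun j => ‖x j‖ ^ 2) (fun j _ => by positivity)
          (Finset.mem_univ i)

lemma arithB (u q D : ℝ) (h : u ≤ q * (1 + D)) (hu : 0 ≤ u) (hq : 0 ≤ q) :
    u ^ 2 ≤ 2 * q ^ 2 * (1 + D ^ 2) := by
  nlinarith [pow_le_pow_left₀ hu h 2, mul_nonneg (sq_nonneg q) (sq_nonneg (1 - D))]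

lemma arithC (x y : ℝ) (hx : 0 ≤ x) (hy : 0 ≤ y) : 16 * (x ^ 2 + y ^ 2) ≤ 16 * (x + y) ^ 2 := by
  nlinarith [mul_nonneg hx hy]


/-- The stochastic quasi-Fejér inequality in terms of the distance to the solution set
(Proposition 4.5): `E[dist(X_{n+1},𝒳_*)² | F_n] ≤ dist(X_n,𝒳_*)² − (ρ_n/2)r_{α_n}(X_n)²
  + (κ_n σ̂(Π_{𝒳_*}(X_n))²/m_{n+1})(1 + dist(X_n,𝒳_*)²)` a.s. -/
theorem stmt_13 {d : ℕ} {Ω Ξ : Type*} [mΩ : MeasurableSpace Ω] [mΞ : MeasurableSpace Ξ]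
    (μ : Measure Ω) [IsProbabilityMeasure μ]
    (P : Measure Ξ) [IsProbabilityMeasure P]
    (𝒳 : Set (EuclideanSpace ℝ (Fin d)))
    (h𝒳ne : 𝒳.Nonempty) (h𝒳cl : IsClosed 𝒳) (h𝒳cv : Convex ℝ 𝒳)
    (proj : EuclideanSpace ℝ (Fin d) → EuclideanSpace ℝ (Fin d))
    (hproj_mem : ∀ x, proj x ∈ 𝒳)
    (hproj_char : ∀ x, ∀ y ∈ 𝒳, ⟪x - proj x, y - proj x⟫ ≤ 0)
    (F : EuclideanSpace ℝ (Fin d) → Ξ → EuclideanSpace ℝ (Fin d))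
    (hFmeas : ∀ x, Measurable (F x))
    (T : EuclideanSpace ℝ (Fin d) → EuclideanSpace ℝ (Fin d))
    (hT : ∀ x, T x = ∫ z, F x z ∂P)
    (hTint : ∀ x, Integrable (fun z => F x z) P)
    (L : ℝ) (hL : 0 < L)
    (hLip : ∀ x y, ‖T x - T y‖ ≤ L * ‖x - y‖)
    (hpm : ∀ x y, 0 ≤ ⟪T x, y - x⟫ → 0 ≤ ⟪T y, y - x⟫)
    -- the (nonempty, closed, convex) solution set and the projection onto it
    (Xstar : Set (EuclideanSpace ℝ (Fin d)))
    (hXstar : Xstar = {x | x ∈ 𝒳 ∧ ∀ y ∈ 𝒳, 0 ≤ ⟪T x, y - x⟫})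
    (hXstar_ne : Xstar.Nonempty)
    (projS : EuclideanSpace ℝ (Fin d) → EuclideanSpace ℝ (Fin d))
    (hprojS_mem : ∀ x, projS x ∈ Xstar)
    (hprojS_char : ∀ x, ∀ y ∈ Xstar, ⟪x - projS x, y - projS x⟫ ≤ 0)
    -- the local variance assumption
    (p σ₀ : ℝ) (hp : 2 ≤ p) (hσ₀ : 0 ≤ σ₀)
    (σ : EuclideanSpace ℝ (Fin d) → ℝ) (hσnonneg : ∀ xs ∈ Xstar, 0 ≤ σ xs)
    (hvar : ∀ x, ∀ xs ∈ Xstar,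
      (∫ z, ‖F x z - T x‖ ^ p ∂P) ^ (1 / p) ≤ σ xs + σ₀ * ‖x - xs‖)
    -- step sizes and batch sizes
    (α : ℕ → ℝ) (hα : ∀ n, 0 < α n) (hαL : ∀ n, Real.sqrt 2 * L * α n < 1)
    (mb : ℕ → ℕ) (hmb : ∀ n, 1 ≤ mb n)
    -- filtrations and adapted processes
    (𝓕 𝓕hat : ℕ → MeasurableSpace Ω)
    (h𝓕le : ∀ n, 𝓕 n ≤ 𝓕hat n) (h𝓕hatle : ∀ n, 𝓕hat n ≤ 𝓕 (n + 1))
    (h𝓕Ω : ∀ n, 𝓕hat n ≤ mΩ)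
    (X Y A B : ℕ → Ω → EuclideanSpace ℝ (Fin d))
    (hXad : ∀ n, StronglyMeasurable[𝓕 n] (X n))
    (hAad : ∀ n, StronglyMeasurable[𝓕hat n] (A n))
    (hYad : ∀ n, StronglyMeasurable[𝓕hat n] (Y n))
    (hBad : ∀ n, StronglyMeasurable[𝓕 (n + 1)] (B n))
    -- the SFBF recursion
    (hY : ∀ n ω, Y n ω = proj (X n ω - α n • A n ω))
    (hX : ∀ n ω, X (n + 1) ω = Y n ω + α n • (A n ω - B n ω))
    -- integrability
    (hXint : ∀ n, ∀ xs ∈ Xstar, Integrable (fun ω => ‖X n ω - xs‖ ^ 2) μ)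
    (hWint : ∀ n, Integrable (fun ω => ‖A n ω - T (X n ω)‖ ^ 2) μ)
    (hZint : ∀ n, Integrable (fun ω => ‖B n ω - T (Y n ω)‖ ^ 2) μ)
    (hAint : ∀ n, Integrable (A n) μ) (hBint : ∀ n, Integrable (B n) μ)
    (hTXint : ∀ n, Integrable (fun ω => T (X n ω)) μ)
    (hTYint : ∀ n, Integrable (fun ω => T (Y n ω)) μ)
    -- the oracle errors have zero conditional mean
    (hW0 : ∀ n, condExp (𝓕 n) μ (fun ω => A n ω - T (X n ω)) =ᵐ[μ] 0)
    (hZ0 : ∀ n, condExp (𝓕hat n) μ (fun ω => B n ω - T (Y n ω)) =ᵐ[μ] 0)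
    -- the conditional second-moment oracle bounds, with constant `C₂`, at every solution
    (C₂ : ℝ) (hC₂ : 0 < C₂)
    (hWbd : ∀ n, ∀ xs ∈ Xstar, ∀ᵐ ω ∂μ,
      (condExp (𝓕 n) μ (fun ω' => ‖A n ω' - T (X n ω')‖ ^ 2) ω) ^ ((1 : ℝ) / 2)
        ≤ (C₂ / Real.sqrt (mb (n + 1))) * (σ xs + σ₀ * ‖X n ω - xs‖))
    (hZbd : ∀ n, ∀ xs ∈ Xstar, ∀ᵐ ω ∂μ,
      (condExp (𝓕hat n) μ (fun ω' => ‖B n ω' - T (Y n ω')‖ ^ 2) ω) ^ ((1 : ℝ) / 2)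
        ≤ (C₂ / Real.sqrt (mb (n + 1))) * (σ xs + σ₀ * ‖Y n ω - xs‖)) :
    ∀ n, ∀ᵐ ω ∂μ,
      condExp (𝓕 n) μ (fun ω' => ‖projS (X (n + 1) ω') - X (n + 1) ω'‖ ^ 2) ω
        ≤ ‖projS (X n ω) - X n ω‖ ^ 2
          - ((1 - 2 * L ^ 2 * (α n) ^ 2) / 2) *
              ‖X n ω - proj (X n ω - α n • T (X n ω))‖ ^ 2
          + (((α n) ^ 2 * C₂ ^ 2 *
                (2 * (4 + (1 - 2 * L ^ 2 * (α n) ^ 2)) +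
                  16 * (1 + α n * L + α n * σ₀ * (C₂ / Real.sqrt (mb (n + 1)))) ^ 2))
              * (max (σ (projS (X n ω))) σ₀) ^ 2 / (mb (n + 1))) *
            (1 + ‖projS (X n ω) - X n ω‖ ^ 2) := by
  intro n
  obtain ⟨xs₀, hxs₀⟩ := hXstar_ne
  have hm12 : 𝓕 n ≤ 𝓕hat n := h𝓕le n
  have hm2 : 𝓕hat n ≤ mΩ := h𝓕Ω n
  have hm1 : 𝓕 n ≤ mΩ := hm12.trans hm2
  haveI hfin1 : IsFiniteMeasure (μ.trim hm1) := isFiniteMeasure_trim hm1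
  haveI hfin2 : IsFiniteMeasure (μ.trim hm2) := isFiniteMeasure_trim hm2
  -- basic facts about the solution set
  have hmemX : ∀ xs ∈ Xstar, xs ∈ 𝒳 := by
    intro xs h; rw [hXstar] at h; exact h.1
  have hVI : ∀ xs ∈ Xstar, ∀ y ∈ 𝒳, 0 ≤ ⟪T xs, y - xs⟫ := by
    intro xs h; rw [hXstar] at h; exact h.2
  have hsol : ∀ xs ∈ Xstar, ∀ y ∈ 𝒳, ⟪T y, xs - y⟫ ≤ 0 := by
    intro xs hxs y hy
    have h1 := hpm xs y (hVI xs hxs y hy)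
    rw [show xs - y = -(y - xs) by abel, inner_neg_right]
    linarith
  have hQ := proj_nonexpansive' hproj_mem hproj_char
  have hQS := proj_nonexpansive' hprojS_mem hprojS_char
  have hdistS := proj_dist_le' hprojS_mem hprojS_char
  have hSfix : ∀ xs ∈ Xstar, projS xs = xs := by
    intro xs hxs
    refine proj_unique' hprojS_mem hprojS_char hxs ?_
    intro y hy
    simp
  have ha0 : 0 < α n := hα n
  set a := α n with ha_def
  have hTfix : ∀ xs ∈ Xstar, proj (xs - a • T xs) = xs := by
    intro xs hxs
    refine proj_unique' hproj_mem hproj_char (hmemX xs hxs) ?_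
    intro y hy
    have h1 := hVI xs hxs y hy
    rw [show xs - a • T xs - xs = -(a • T xs) by abel, inner_neg_left, real_inner_smul_left]
    nlinarith [ha0.le]
  -- continuity facts
  have hTcont : Continuous T := by
    refine (LipschitzWith.of_dist_le_mul (K := ⟨L, hL.le⟩) ?_).continuous
    intro x y
    rw [dist_eq_norm, dist_eq_norm]
    exact hLip x y
  have hprojCont : Continuous proj := by
    refine (LipschitzWith.of_dist_le_mul (K := 1) ?_).continuous
    intro x y
    rw [dist_eq_norm, dist_eq_norm, NNReal.coe_one, one_mul]
    exact hQ x y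
  have hprojSCont : Continuous projS := by
    refine (LipschitzWith.of_dist_le_mul (K := 1) ?_).continuous
    intro x y
    rw [dist_eq_norm, dist_eq_norm, NNReal.coe_one, one_mul]
    exact hQS x y
  -- constants
  set c := C₂ / Real.sqrt (mb (n + 1)) with hc_def
  have hmbpos : (0:ℝ) < (mb (n + 1) : ℝ) := by
    have h := hmb (n + 1)
    exact_mod_cast Nat.lt_of_lt_of_le Nat.zero_lt_one h
  have hsqpos : 0 < Real.sqrt (mb (n + 1)) := Real.sqrt_pos.mpr hmbpos
  have hc0 : 0 < c := div_pos hC₂ hsqpos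
  have hc2 : c ^ 2 = C₂ ^ 2 / (mb (n + 1) : ℝ) := by
    rw [hc_def, div_pow, Real.sq_sqrt hmbpos.le]
  set ρ := 1 - 2 * L ^ 2 * a ^ 2 with hρ_def
  have hρ0 : 0 < ρ := by
    have h1 := hαL n
    have h2 : Real.sqrt 2 ^ 2 = 2 := Real.sq_sqrt (by norm_num)
    have h3 : 0 ≤ Real.sqrt 2 * L * a :=
      mul_nonneg (mul_nonneg (Real.sqrt_nonneg 2) hL.le) ha0.le
    rw [hρ_def]; nlinarith
  have hρ1 : ρ ≤ 1 := by rw [hρ_def]; nlinarith [sq_nonneg (L * a)]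
  -- strong measurability
  have hXsm : StronglyMeasurable (X n) := (hXad n).mono hm1
  have hXsm' : StronglyMeasurable (X (n + 1)) :=
    (hXad (n + 1)).mono ((h𝓕le (n + 1)).trans (h𝓕Ω (n + 1)))
  have smY : StronglyMeasurable (Y n) := (hYad n).mono hm2
  have smW : StronglyMeasurable (fun ω => A n ω - T (X n ω)) :=
    ((hAad n).mono hm2).sub (hTcont.comp_stronglyMeasurable hXsm)
  have smZ : StronglyMeasurable (fun ω => B n ω - T (Y n ω)) :=
    ((hBad n).mono ((h𝓕le (n + 1)).trans (h𝓕Ω (n + 1)))).sub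
      (hTcont.comp_stronglyMeasurable smY)
  have smV : StronglyMeasurable[𝓕 n] (fun ω => projS (X n ω)) :=
    hprojSCont.comp_stronglyMeasurable (hXad n)
  have smD : StronglyMeasurable[𝓕 n] (fun ω => ‖X n ω - projS (X n ω)‖) :=
    ((hXad n).sub smV).norm
  have smr : StronglyMeasurable[𝓕 n] (fun ω => ‖X n ω - proj (X n ω - a • T (X n ω))‖) := by
    have hco : Continuous fun z : EuclideanSpace ℝ (Fin d) => ‖z - proj (z - a • T z)‖ :=
      (continuous_id.sub (hprojCont.comp (continuous_id.sub (hTcont.const_smul a)))).norm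
    exact hco.comp_stronglyMeasurable (hXad n)
  -- pointwise norm estimates
  have hDle : ∀ ω, ‖X n ω - projS (X n ω)‖ ≤ ‖X n ω - xs₀‖ := by
    intro ω
    have h := hdistS (X n ω) xs₀ hxs₀
    rwa [norm_sub_rev (projS (X n ω))] at h
  have hVle : ∀ ω, ‖projS (X n ω) - xs₀‖ ≤ ‖X n ω - xs₀‖ := by
    intro ω
    have h := hQS (X n ω) xs₀
    rwa [hSfix xs₀ hxs₀] at h
  have hYble : ∀ ω, ∀ xs ∈ Xstar,
      ‖Y n ω - xs‖ ≤ (1 + a * L) * ‖X n ω - xs‖ + a * ‖A n ω - T (X n ω)‖ := by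
    intro ω xs hxs
    have h1 : Y n ω = proj (X n ω - a • A n ω) := hY n ω
    have h2 : proj (xs - a • T xs) = xs := hTfix xs hxs
    have h3 : ‖Y n ω - xs‖ ≤ ‖(X n ω - a • A n ω) - (xs - a • T xs)‖ := by
      have hq := hQ (X n ω - a • A n ω) (xs - a • T xs)
      rw [h2] at hq
      rwa [← h1] at hq
    have hv : (X n ω - a • A n ω) - (xs - a • T xs)
        = ((X n ω - xs) - a • (T (X n ω) - T xs)) - a • (A n ω - T (X n ω)) := by
      rw [smul_sub, smul_sub]; abel
    rw [hv] at h3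
    have h4 : ‖((X n ω - xs) - a • (T (X n ω) - T xs)) - a • (A n ω - T (X n ω))‖
        ≤ ‖(X n ω - xs) - a • (T (X n ω) - T xs)‖ + ‖a • (A n ω - T (X n ω))‖ :=
      norm_sub_le _ _
    have h5 : ‖(X n ω - xs) - a • (T (X n ω) - T xs)‖
        ≤ ‖X n ω - xs‖ + ‖a • (T (X n ω) - T xs)‖ := norm_sub_le _ _
    rw [norm_smul, Real.norm_eq_abs, abs_of_nonneg ha0.le] at h4 h5
    have h6 := hLip (X n ω) xs
    nlinarith [ha0.le]
  have hrle : ∀ ω, ‖X n ω - proj (X n ω - a • T (X n ω))‖ ≤ (2 + a * L) * ‖X n ω - xs₀‖ := by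
    intro ω
    have t1 : ‖X n ω - proj (X n ω - a • T (X n ω))‖
        ≤ ‖X n ω - xs₀‖ + ‖xs₀ - proj (X n ω - a • T (X n ω))‖ := by
      rw [show X n ω - proj (X n ω - a • T (X n ω))
          = (X n ω - xs₀) + (xs₀ - proj (X n ω - a • T (X n ω))) by abel]
      exact norm_add_le _ _
    have t2 : ‖xs₀ - proj (X n ω - a • T (X n ω))‖
        ≤ ‖(xs₀ - a • T xs₀) - (X n ω - a • T (X n ω))‖ := by
      conv_lhs => rw [← hTfix xs₀ hxs₀]
      exact hQ _ _
    have hv : (xs₀ - a • T xs₀) - (X n ω - a • T (X n ω))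
        = (xs₀ - X n ω) - a • (T xs₀ - T (X n ω)) := by
      rw [smul_sub]; abel
    rw [hv] at t2
    have t3 : ‖(xs₀ - X n ω) - a • (T xs₀ - T (X n ω))‖
        ≤ ‖xs₀ - X n ω‖ + ‖a • (T xs₀ - T (X n ω))‖ := norm_sub_le _ _
    rw [norm_smul, Real.norm_eq_abs, abs_of_nonneg ha0.le] at t3
    have t4 := hLip xs₀ (X n ω)
    have t5 : ‖xs₀ - X n ω‖ = ‖X n ω - xs₀‖ := norm_sub_rev _ _
    rw [t5] at t3 t4
    nlinarith [ha0.le]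
  -- integrability
  have iX : Integrable (fun ω => ‖X n ω - xs₀‖ ^ 2) μ := hXint n xs₀ hxs₀
  have iXp : Integrable (fun ω => ‖X (n + 1) ω - xs₀‖ ^ 2) μ := hXint (n + 1) xs₀ hxs₀
  have iW2 : Integrable (fun ω => ‖A n ω - T (X n ω)‖ ^ 2) μ := hWint n
  have iZ2 : Integrable (fun ω => ‖B n ω - T (Y n ω)‖ ^ 2) μ := hZint n
  have iD2 : Integrable (fun ω => ‖X n ω - projS (X n ω)‖ ^ 2) μ := by
    refine iX.mono' ((smD.pow 2).mono hm1).aestronglyMeasurable (ae_of_all _ fun ω => ?_)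
    rw [Real.norm_eq_abs, abs_of_nonneg (by positivity)]
    exact pow_le_pow_left₀ (norm_nonneg _) (hDle ω) 2
  have ir2 : Integrable (fun ω => ‖X n ω - proj (X n ω - a • T (X n ω))‖ ^ 2) μ := by
    refine (iX.const_mul ((2 + a * L) ^ 2)).mono'
      ((smr.pow 2).mono hm1).aestronglyMeasurable (ae_of_all _ fun ω => ?_)
    rw [Real.norm_eq_abs, abs_of_nonneg (by positivity)]
    nlinarith [hrle ω, norm_nonneg (X n ω - proj (X n ω - a • T (X n ω))), norm_nonneg (X n ω - xs₀)]
  have iVY2 : Integrable (fun ω => ‖projS (X n ω) - Y n ω‖ ^ 2) μ := by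
    have hb : ∀ ω, ‖projS (X n ω) - Y n ω‖
        ≤ (2 + a * L) * ‖X n ω - xs₀‖ + a * ‖A n ω - T (X n ω)‖ := by
      intro ω
      have t1 : ‖projS (X n ω) - Y n ω‖ ≤ ‖projS (X n ω) - xs₀‖ + ‖xs₀ - Y n ω‖ := by
        rw [show projS (X n ω) - Y n ω = (projS (X n ω) - xs₀) + (xs₀ - Y n ω) by abel]
        exact norm_add_le _ _
      have t2 := hVle ω
      have t3 : ‖xs₀ - Y n ω‖ = ‖Y n ω - xs₀‖ := norm_sub_rev _ _
      have t4 := hYble ω xs₀ hxs₀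
      nlinarith [norm_nonneg (X n ω - xs₀)]
    refine ((iX.const_mul (2 * (2 + a * L) ^ 2)).add (iW2.const_mul (2 * a ^ 2))).mono'
      ((((smV.mono hm1).sub smY).norm.pow 2).aestronglyMeasurable) (ae_of_all _ fun ω => ?_)
    rw [Real.norm_eq_abs, abs_of_nonneg (by positivity)]
    have key : ‖projS (X n ω) - Y n ω‖ ^ 2
        ≤ ((2 + a * L) * ‖X n ω - xs₀‖ + a * ‖A n ω - T (X n ω)‖) ^ 2 :=
      pow_le_pow_left₀ (norm_nonneg _) (hb ω) 2
    simp only [Pi.add_apply]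
    nlinarith [key, sq_nonneg ((2 + a * L) * ‖X n ω - xs₀‖ - a * ‖A n ω - T (X n ω)‖)]
  have icross : Integrable (fun ω => ⟪B n ω - T (Y n ω), projS (X n ω) - Y n ω⟫) μ := by
    refine ((iZ2.const_mul (1/2 : ℝ)).add (iVY2.const_mul (1/2 : ℝ))).mono'
      ((smZ.inner ((smV.mono hm1).sub smY)).aestronglyMeasurable) (ae_of_all _ fun ω => ?_)
    rw [Real.norm_eq_abs]
    refine le_trans (abs_real_inner_le_norm (B n ω - T (Y n ω)) (projS (X n ω) - Y n ω)) ?_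
    simp only [Pi.add_apply]
    nlinarith [sq_nonneg (‖B n ω - T (Y n ω)‖ - ‖projS (X n ω) - Y n ω‖)]
  have If : Integrable (fun ω => ‖projS (X (n + 1) ω) - X (n + 1) ω‖ ^ 2) μ := by
    refine iXp.mono'
      ((((hprojSCont.comp_stronglyMeasurable hXsm').sub hXsm').norm.pow 2).aestronglyMeasurable)
      (ae_of_all _ fun ω => ?_)
    rw [Real.norm_eq_abs, abs_of_nonneg (by positivity)]
    exact pow_le_pow_left₀ (norm_nonneg _) (hdistS (X (n + 1) ω) xs₀ hxs₀) 2
  have Ig : Integrable (fun ω => ‖X (n + 1) ω - projS (X n ω)‖ ^ 2) μ := by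
    refine ((iXp.const_mul 2).add (iX.const_mul 2)).mono'
      (((hXsm'.sub ((smV.mono hm1))).norm.pow 2).aestronglyMeasurable)
      (ae_of_all _ fun ω => ?_)
    rw [Real.norm_eq_abs, abs_of_nonneg (by positivity)]
    have t1 : ‖X (n + 1) ω - projS (X n ω)‖ ≤ ‖X (n + 1) ω - xs₀‖ + ‖xs₀ - projS (X n ω)‖ := by
      rw [show X (n + 1) ω - projS (X n ω) = (X (n + 1) ω - xs₀) + (xs₀ - projS (X n ω)) by abel]
      exact norm_add_le _ _
    have t2 : ‖xs₀ - projS (X n ω)‖ = ‖projS (X n ω) - xs₀‖ := norm_sub_rev _ _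
    have t3 := hVle ω
    have hle : ‖X (n + 1) ω - projS (X n ω)‖ ≤ ‖X (n + 1) ω - xs₀‖ + ‖X n ω - xs₀‖ := by
      linarith
    have key : ‖X (n + 1) ω - projS (X n ω)‖ ^ 2
        ≤ (‖X (n + 1) ω - xs₀‖ + ‖X n ω - xs₀‖) ^ 2 :=
      pow_le_pow_left₀ (norm_nonneg _) hle 2
    simp only [Pi.add_apply]
    nlinarith [key, sq_nonneg (‖X (n + 1) ω - xs₀‖ - ‖X n ω - xs₀‖)]
  -- envelope for the W-oracle bound
  obtain ⟨θW, θWcont, θW0, θWle, θWlip, θWae⟩ :=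
    envelope_bound (μ := μ) Xstar hxs₀ (fun xs => c * σ xs)
      (fun xs hxs => mul_nonneg hc0.le (hσnonneg xs hxs))
      (fun ω => (condExp (𝓕 n) μ (fun ω' => ‖A n ω' - T (X n ω')‖ ^ 2) ω) ^ ((1 : ℝ) / 2))
      (X n) (mul_nonneg hc0.le hσ₀)
      (by
        intro xs hxs
        filter_upwards [hWbd n xs hxs] with ω hω
        calc (condExp (𝓕 n) μ (fun ω' => ‖A n ω' - T (X n ω')‖ ^ 2) ω) ^ ((1 : ℝ) / 2)
            ≤ c * (σ xs + σ₀ * ‖X n ω - xs‖) := hω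
          _ = c * σ xs + c * σ₀ * ‖X n ω - xs‖ := by ring)
  obtain ⟨θZ, θZcont, θZ0, θZle, θZlip, θZae⟩ :=
    envelope_bound (μ := μ) Xstar hxs₀ (fun xs => c * σ xs)
      (fun xs hxs => mul_nonneg hc0.le (hσnonneg xs hxs))
      (fun ω => (condExp (𝓕hat n) μ (fun ω' => ‖B n ω' - T (Y n ω')‖ ^ 2) ω) ^ ((1 : ℝ) / 2))
      (Y n) (mul_nonneg hc0.le hσ₀)
      (by
        intro xs hxs
        filter_upwards [hZbd n xs hxs] with ω hω
        calc (condExp (𝓕hat n) μ (fun ω' => ‖B n ω' - T (Y n ω')‖ ^ 2) ω) ^ ((1 : ℝ) / 2)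
            ≤ c * (σ xs + σ₀ * ‖Y n ω - xs‖) := hω
          _ = c * σ xs + c * σ₀ * ‖Y n ω - xs‖ := by ring)
  have hGW0 : 0 ≤ᵐ[μ] condExp (𝓕 n) μ (fun ω' => ‖A n ω' - T (X n ω')‖ ^ 2) :=
    condExp_nonneg (ae_of_all _ fun ω => by positivity)
  have hGZ20 : 0 ≤ᵐ[μ] condExp (𝓕hat n) μ (fun ω' => ‖B n ω' - T (Y n ω')‖ ^ 2) :=
    condExp_nonneg (ae_of_all _ fun ω => by positivity)
  have hrpow : ∀ (x : ℝ), 0 ≤ x → (x ^ ((1 : ℝ) / 2)) ^ 2 = x := by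
    intro x hx
    rw [← Real.rpow_natCast (x ^ ((1 : ℝ) / 2)) 2, ← Real.rpow_mul hx]
    norm_num
  have hGWbd : ∀ᵐ ω ∂μ, condExp (𝓕 n) μ (fun ω' => ‖A n ω' - T (X n ω')‖ ^ 2) ω
      ≤ (θW (projS (X n ω)) + c * σ₀ * ‖X n ω - projS (X n ω)‖) ^ 2 := by
    filter_upwards [θWae, hGW0] with ω h1 h2
    have h3 := h1 (projS (X n ω)) (hprojS_mem (X n ω))
    have h4 := hrpow _ h2
    calc condExp (𝓕 n) μ (fun ω' => ‖A n ω' - T (X n ω')‖ ^ 2) ω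
        = ((condExp (𝓕 n) μ (fun ω' => ‖A n ω' - T (X n ω')‖ ^ 2) ω) ^ ((1 : ℝ) / 2)) ^ 2 :=
          h4.symm
      _ ≤ (θW (projS (X n ω)) + c * σ₀ * ‖X n ω - projS (X n ω)‖) ^ 2 :=
          pow_le_pow_left₀ (Real.rpow_nonneg h2 _) h3 2
  have hGZ2bd : ∀ᵐ ω ∂μ, condExp (𝓕hat n) μ (fun ω' => ‖B n ω' - T (Y n ω')‖ ^ 2) ω
      ≤ (θZ (projS (X n ω)) + c * σ₀ * ‖Y n ω - projS (X n ω)‖) ^ 2 := by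
    filter_upwards [θZae, hGZ20] with ω h1 h2
    have h3 := h1 (projS (X n ω)) (hprojS_mem (X n ω))
    have h4 := hrpow _ h2
    calc condExp (𝓕hat n) μ (fun ω' => ‖B n ω' - T (Y n ω')‖ ^ 2) ω
        = ((condExp (𝓕hat n) μ (fun ω' => ‖B n ω' - T (Y n ω')‖ ^ 2) ω) ^ ((1 : ℝ) / 2)) ^ 2 :=
          h4.symm
      _ ≤ (θZ (projS (X n ω)) + c * σ₀ * ‖Y n ω - projS (X n ω)‖) ^ 2 :=
          pow_le_pow_left₀ (Real.rpow_nonneg h2 _) h3 2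
  -- the auxiliary functions for the Z-term
  have sm_u : StronglyMeasurable[𝓕 n]
      (fun ω => θZ (projS (X n ω)) + c * σ₀ * (1 + a * L) * ‖X n ω - projS (X n ω)‖) :=
    (θZcont.comp_stronglyMeasurable smV).add (stronglyMeasurable_const.mul smD)
  have hu0 : ∀ ω, 0 ≤ θZ (projS (X n ω)) + c * σ₀ * (1 + a * L) * ‖X n ω - projS (X n ω)‖ := by
    intro ω
    have := θZ0 (projS (X n ω))
    have hal : (0:ℝ) ≤ 1 + a * L := by nlinarith [ha0.le, hL.le]
    have h2 : 0 ≤ c * σ₀ * (1 + a * L) * ‖X n ω - projS (X n ω)‖ := by positivity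
    linarith
  have hubd : ∀ ω, θZ (projS (X n ω)) + c * σ₀ * (1 + a * L) * ‖X n ω - projS (X n ω)‖
      ≤ θZ xs₀ + (c * σ₀ * (2 + a * L)) * ‖X n ω - xs₀‖ := by
    intro ω
    have h1 := θZlip (projS (X n ω)) xs₀
    have h2 := hVle ω
    have h3 := hDle ω
    have hcs : 0 ≤ c * σ₀ := mul_nonneg hc0.le hσ₀
    nlinarith [mul_le_mul_of_nonneg_left h2 hcs, mul_le_mul_of_nonneg_left h3
      (mul_nonneg hcs (by nlinarith [ha0.le, hL.le] : (0:ℝ) ≤ 1 + a * L))]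
  have iu2 : Integrable
      (fun ω => (θZ (projS (X n ω)) + c * σ₀ * (1 + a * L) * ‖X n ω - projS (X n ω)‖) ^ 2) μ := by
    refine ((integrable_const (2 * θZ xs₀ ^ 2)).add
      (iX.const_mul (2 * (c * σ₀ * (2 + a * L)) ^ 2))).mono'
      (((sm_u.pow 2).mono hm1).aestronglyMeasurable) (ae_of_all _ fun ω => ?_)
    rw [Real.norm_eq_abs, abs_of_nonneg (sq_nonneg _)]
    simp only [Pi.add_apply]
    have key := pow_le_pow_left₀ (hu0 ω) (hubd ω) 2
    nlinarith [key, sq_nonneg (θZ xs₀ - (c * σ₀ * (2 + a * L)) * ‖X n ω - xs₀‖)]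
  have iq' : Integrable
      (fun ω => (θZ (projS (X n ω)) + c * σ₀ * ‖Y n ω - projS (X n ω)‖) ^ 2) μ := by
    have hbq : ∀ ω, θZ (projS (X n ω)) + c * σ₀ * ‖Y n ω - projS (X n ω)‖
        ≤ θZ xs₀ + (c * σ₀ * (2 + a * L)) * ‖X n ω - xs₀‖
          + (c * σ₀ * a) * ‖A n ω - T (X n ω)‖ := by
      intro ω
      have h1 := θZlip (projS (X n ω)) xs₀
      have h2 := hVle ω
      have h3 := hDle ω
      have h4 := hYble ω (projS (X n ω)) (hprojS_mem (X n ω))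
      have hcs : 0 ≤ c * σ₀ := mul_nonneg hc0.le hσ₀
      have h5 : ‖Y n ω - projS (X n ω)‖ ≤ (1 + a * L) * ‖X n ω - xs₀‖
          + a * ‖A n ω - T (X n ω)‖ := by
        have h6 : (1 + a * L) * ‖X n ω - projS (X n ω)‖ ≤ (1 + a * L) * ‖X n ω - xs₀‖ :=
          mul_le_mul_of_nonneg_left h3 (by nlinarith [ha0.le, hL.le])
        linarith
      nlinarith [mul_le_mul_of_nonneg_left h2 hcs, mul_le_mul_of_nonneg_left h5 hcs]
    have hbq0 : ∀ ω, 0 ≤ θZ (projS (X n ω)) + c * σ₀ * ‖Y n ω - projS (X n ω)‖ := by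
      intro ω
      have := θZ0 (projS (X n ω))
      have h2 : 0 ≤ c * σ₀ * ‖Y n ω - projS (X n ω)‖ := by positivity
      linarith
    refine (((integrable_const (3 * θZ xs₀ ^ 2)).add
      (iX.const_mul (3 * (c * σ₀ * (2 + a * L)) ^ 2))).add
      (iW2.const_mul (3 * (c * σ₀ * a) ^ 2))).mono'
      ((((θZcont.comp_stronglyMeasurable (smV.mono hm1)).add
        (stronglyMeasurable_const.mul ((smY.sub (smV.mono hm1)).norm))).pow 2).aestronglyMeasurable)
      (ae_of_all _ fun ω => ?_)
    rw [Real.norm_eq_abs, abs_of_nonneg (sq_nonneg _)]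
    simp only [Pi.add_apply]
    have key := pow_le_pow_left₀ (hbq0 ω) (hbq ω) 2
    nlinarith [key, sq_nonneg (θZ xs₀ - (c * σ₀ * (2 + a * L)) * ‖X n ω - xs₀‖),
      sq_nonneg (θZ xs₀ - (c * σ₀ * a) * ‖A n ω - T (X n ω)‖),
      sq_nonneg ((c * σ₀ * (2 + a * L)) * ‖X n ω - xs₀‖ - (c * σ₀ * a) * ‖A n ω - T (X n ω)‖)]
  have iqt : Integrable (fun ω =>
      2 * (θZ (projS (X n ω)) + c * σ₀ * (1 + a * L) * ‖X n ω - projS (X n ω)‖) ^ 2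
        + (2 * (c * σ₀ * a) ^ 2) * ‖A n ω - T (X n ω)‖ ^ 2) μ :=
    (iu2.const_mul 2).add (iW2.const_mul (2 * (c * σ₀ * a) ^ 2))
  have hq'qt : ∀ ω, (θZ (projS (X n ω)) + c * σ₀ * ‖Y n ω - projS (X n ω)‖) ^ 2
      ≤ 2 * (θZ (projS (X n ω)) + c * σ₀ * (1 + a * L) * ‖X n ω - projS (X n ω)‖) ^ 2
        + (2 * (c * σ₀ * a) ^ 2) * ‖A n ω - T (X n ω)‖ ^ 2 := by
    intro ω
    have h4 := hYble ω (projS (X n ω)) (hprojS_mem (X n ω))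
    have hcs : 0 ≤ c * σ₀ := mul_nonneg hc0.le hσ₀
    have hbase : θZ (projS (X n ω)) + c * σ₀ * ‖Y n ω - projS (X n ω)‖
        ≤ (θZ (projS (X n ω)) + c * σ₀ * (1 + a * L) * ‖X n ω - projS (X n ω)‖)
          + (c * σ₀ * a) * ‖A n ω - T (X n ω)‖ := by
      nlinarith [mul_le_mul_of_nonneg_left h4 hcs]
    have hb0 : 0 ≤ θZ (projS (X n ω)) + c * σ₀ * ‖Y n ω - projS (X n ω)‖ := by
      have := θZ0 (projS (X n ω))
      have h2 : 0 ≤ c * σ₀ * ‖Y n ω - projS (X n ω)‖ := by positivity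
      linarith
    have key := pow_le_pow_left₀ hb0 hbase 2
    nlinarith [key, sq_nonneg ((θZ (projS (X n ω))
      + c * σ₀ * (1 + a * L) * ‖X n ω - projS (X n ω)‖) - (c * σ₀ * a) * ‖A n ω - T (X n ω)‖)]
  -- deterministic one-step inequality
  have hdet : ∀ ω, ‖X (n + 1) ω - projS (X n ω)‖ ^ 2
      ≤ (‖X n ω - projS (X n ω)‖ ^ 2 - ρ / 2 * ‖X n ω - proj (X n ω - a • T (X n ω))‖ ^ 2)
        + ((4 + ρ) * a ^ 2) * ‖A n ω - T (X n ω)‖ ^ 2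
        + (4 * a ^ 2) * ‖B n ω - T (Y n ω)‖ ^ 2
        + (2 * a) * ⟪B n ω - T (Y n ω), projS (X n ω) - Y n ω⟫ := by
    intro ω
    have hVmem := hprojS_mem (X n ω)
    have hTY : ⟪T (proj (X n ω - a • A n ω)), projS (X n ω) - proj (X n ω - a • A n ω)⟫ ≤ 0 :=
      hsol _ hVmem _ (hproj_mem _)
    have key := det_key' hproj_char T L a ha0.le hLip (X n ω) (projS (X n ω)) (A n ω) (B n ω)
      (hmemX _ hVmem) hTY
    have hrb : ‖X n ω - proj (X n ω - a • T (X n ω))‖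
        ≤ ‖X n ω - proj (X n ω - a • A n ω)‖ + a * ‖A n ω - T (X n ω)‖ := by
      have s1 : ‖X n ω - proj (X n ω - a • T (X n ω))‖
          ≤ ‖X n ω - proj (X n ω - a • A n ω)‖
            + ‖proj (X n ω - a • A n ω) - proj (X n ω - a • T (X n ω))‖ := by
        rw [show X n ω - proj (X n ω - a • T (X n ω))
            = (X n ω - proj (X n ω - a • A n ω))
              + (proj (X n ω - a • A n ω) - proj (X n ω - a • T (X n ω))) by abel]
        exact norm_add_le _ _
      have s2 : ‖proj (X n ω - a • A n ω) - proj (X n ω - a • T (X n ω))‖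
          ≤ ‖(X n ω - a • A n ω) - (X n ω - a • T (X n ω))‖ := hQ _ _
      have s3 : (X n ω - a • A n ω) - (X n ω - a • T (X n ω)) = -(a • (A n ω - T (X n ω))) := by
        rw [smul_sub]; abel
      rw [s3, norm_neg, norm_smul, Real.norm_eq_abs, abs_of_nonneg ha0.le] at s2
      linarith
    have hr2 : ‖X n ω - proj (X n ω - a • T (X n ω))‖ ^ 2
        ≤ 2 * ‖X n ω - proj (X n ω - a • A n ω)‖ ^ 2 + 2 * a ^ 2 * ‖A n ω - T (X n ω)‖ ^ 2 := by
      nlinarith [hrb, norm_nonneg (X n ω - proj (X n ω - a • T (X n ω))),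
        norm_nonneg (X n ω - proj (X n ω - a • A n ω)), norm_nonneg (A n ω - T (X n ω)),
        sq_nonneg (‖X n ω - proj (X n ω - a • A n ω)‖ - a * ‖A n ω - T (X n ω)‖), ha0.le]
    have hρ0' : 0 < 1 - 2 * L ^ 2 * a ^ 2 := by rw [← hρ_def]; exact hρ0
    rw [hX n ω, hY n ω, hρ_def]
    have hmul := mul_le_mul_of_nonneg_left hr2
      (by linarith : (0:ℝ) ≤ (1 - 2 * L ^ 2 * a ^ 2) / 2)
    nlinarith [key, hmul]
  -- cross term machinery
  have hZvec : Integrable (fun ω => B n ω - T (Y n ω)) μ := (hBint n).sub (hTYint n)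
  have hZiInt : ∀ i : Fin d, Integrable (fun ω => (B n ω - T (Y n ω)) i) μ := by
    intro i
    simpa using (EuclideanSpace.proj (𝕜 := ℝ) i).integrable_comp hZvec
  have hZi0 : ∀ i : Fin d,
      condExp (𝓕hat n) μ (fun ω => (B n ω - T (Y n ω)) i) =ᵐ[μ] 0 := by
    intro i
    have hset0 : ∀ s, MeasurableSet[𝓕hat n] s → ∫ ω in s, (B n ω - T (Y n ω)) ∂μ = 0 := by
      intro s hs
      have h1 := setIntegral_condExp hm2 hZvec hs
      have h2 : ∫ ω in s, (condExp (𝓕hat n) μ (fun ω' => B n ω' - T (Y n ω')) ω) ∂μ = 0 := by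
        rw [setIntegral_congr_ae (hm2 s hs) ((hZ0 n).mono fun ω hω _ => hω)]
        simp
      rw [← h1]; exact h2
    refine (ae_eq_condExp_of_forall_setIntegral_eq hm2 (hZiInt i)
      (fun s _ _ => (integrable_zero _ _ _).integrableOn) (fun s hs hμs => ?_) ?_).symm
    · simp only [Pi.zero_apply, integral_zero]
      have h3 := (EuclideanSpace.proj (𝕜 := ℝ) i).integral_comp_comm (hZvec.restrict (s := s))
      rw [hset0 s hs] at h3
      simpa using h3.symm
    · exact stronglyMeasurable_zero.aestronglyMeasurable
  have hprodI : ∀ i : Fin d,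
      Integrable (fun ω => (projS (X n ω) - Y n ω) i * (B n ω - T (Y n ω)) i) μ := by
    intro i
    have hGi : StronglyMeasurable (fun ω => (projS (X n ω) - Y n ω) i) :=
      (EuclideanSpace.proj (𝕜 := ℝ) i).continuous.comp_stronglyMeasurable
        ((smV.mono hm1).sub smY)
    have hZi : StronglyMeasurable (fun ω => (B n ω - T (Y n ω)) i) :=
      (EuclideanSpace.proj (𝕜 := ℝ) i).continuous.comp_stronglyMeasurable smZ
    refine ((iVY2.const_mul (1/2 : ℝ)).add (iZ2.const_mul (1/2 : ℝ))).mono'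
      ((hGi.mul hZi).aestronglyMeasurable) (ae_of_all _ fun ω => ?_)
    rw [Real.norm_eq_abs, abs_mul]
    have g1 := coord_abs_le_norm (projS (X n ω) - Y n ω) i
    have g2 := coord_abs_le_norm (B n ω - T (Y n ω)) i
    have g3 : |(projS (X n ω) - Y n ω) i| * |(B n ω - T (Y n ω)) i|
        ≤ ‖projS (X n ω) - Y n ω‖ * ‖B n ω - T (Y n ω)‖ :=
      mul_le_mul g1 g2 (abs_nonneg _) (norm_nonneg _)
    simp only [Pi.add_apply]
    nlinarith [g3, sq_nonneg (‖projS (X n ω) - Y n ω‖ - ‖B n ω - T (Y n ω)‖)]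
  have hGiZi : ∀ i : Fin d, condExp (𝓕hat n) μ
      (fun ω => (projS (X n ω) - Y n ω) i * (B n ω - T (Y n ω)) i) =ᵐ[μ] 0 := by
    intro i
    have hGi : StronglyMeasurable[𝓕hat n] (fun ω => (projS (X n ω) - Y n ω) i) :=
      (EuclideanSpace.proj (𝕜 := ℝ) i).continuous.comp_stronglyMeasurable
        ((smV.mono hm12).sub (hYad n))
    have hpull := condExp_mul_of_stronglyMeasurable_left hGi (hprodI i) (hZiInt i)
    refine hpull.trans ?_
    filter_upwards [hZi0 i] with ω h2
    simp only [Pi.zero_apply] at h2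
    simp only [Pi.mul_apply, Pi.zero_apply, h2, mul_zero]
  have hcrossm2 : condExp (𝓕hat n) μ
      (fun ω => ⟪B n ω - T (Y n ω), projS (X n ω) - Y n ω⟫) =ᵐ[μ] 0 := by
    have hexp : (fun ω => ⟪B n ω - T (Y n ω), projS (X n ω) - Y n ω⟫)
        = ∑ i : Fin d, (fun ω => (projS (X n ω) - Y n ω) i * (B n ω - T (Y n ω)) i) := by
      funext ω
      rw [Finset.sum_apply]
      rw [PiLp.inner_apply]
      refine Finset.sum_congr rfl fun i _ => ?_
      simp only [RCLike.inner_apply, starRingEnd_apply, star_trivial]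
    rw [hexp]
    refine (condExp_finset_sum (fun i _ => hprodI i) (𝓕hat n)).trans ?_
    have hall : ∀ᵐ ω ∂μ, ∀ i : Fin d, condExp (𝓕hat n) μ
        (fun ω' => (projS (X n ω') - Y n ω') i * (B n ω' - T (Y n ω')) i) ω = 0 := by
      rw [ae_all_iff]
      intro i
      filter_upwards [hGiZi i] with ω h using by simpa using h
    filter_upwards [hall] with ω hω
    simp only [Finset.sum_apply, Pi.zero_apply]
    exact Finset.sum_eq_zero fun i _ => hω i
  have hcross0 : condExp (𝓕 n) μ
      (fun ω => ⟪B n ω - T (Y n ω), projS (X n ω) - Y n ω⟫) =ᵐ[μ] 0 := by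
    refine ((condExp_condExp_of_le (m₁ := 𝓕 n) (m₂ := 𝓕hat n)
      (f := fun ω => ⟪B n ω - T (Y n ω), projS (X n ω) - Y n ω⟫) hm12 hm2).symm).trans ?_
    refine (condExp_congr_ae (m := 𝓕 n) hcrossm2).trans ?_
    rw [condExp_zero]
  -- integrability of the pieces
  have i0 : Integrable (fun ω => ‖X n ω - projS (X n ω)‖ ^ 2
      - ρ / 2 * ‖X n ω - proj (X n ω - a • T (X n ω))‖ ^ 2) μ := iD2.sub (ir2.const_mul (ρ / 2))
  have i1 : Integrable (fun ω => ((4 + ρ) * a ^ 2) * ‖A n ω - T (X n ω)‖ ^ 2) μ :=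
    iW2.const_mul _
  have i2 : Integrable (fun ω => (4 * a ^ 2) * ‖B n ω - T (Y n ω)‖ ^ 2) μ := iZ2.const_mul _
  have i3 : Integrable
      (fun ω => (2 * a) * ⟪B n ω - T (Y n ω), projS (X n ω) - Y n ω⟫) μ :=
    icross.const_mul _
  have iRHS : Integrable (fun ω =>
      (‖X n ω - projS (X n ω)‖ ^ 2 - ρ / 2 * ‖X n ω - proj (X n ω - a • T (X n ω))‖ ^ 2)
        + ((4 + ρ) * a ^ 2) * ‖A n ω - T (X n ω)‖ ^ 2
        + (4 * a ^ 2) * ‖B n ω - T (Y n ω)‖ ^ 2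
        + (2 * a) * ⟪B n ω - T (Y n ω), projS (X n ω) - Y n ω⟫) μ :=
    ((i0.add i1).add i2).add i3
  have smF0 : StronglyMeasurable[𝓕 n] (fun ω => ‖X n ω - projS (X n ω)‖ ^ 2
      - ρ / 2 * ‖X n ω - proj (X n ω - a • T (X n ω))‖ ^ 2) :=
    (smD.pow 2).sub (stronglyMeasurable_const.mul (smr.pow 2))
  have eF0 : condExp (𝓕 n) μ (fun ω => ‖X n ω - projS (X n ω)‖ ^ 2
      - ρ / 2 * ‖X n ω - proj (X n ω - a • T (X n ω))‖ ^ 2)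
      = fun ω => ‖X n ω - projS (X n ω)‖ ^ 2
        - ρ / 2 * ‖X n ω - proj (X n ω - a • T (X n ω))‖ ^ 2 :=
    condExp_of_stronglyMeasurable hm1 smF0 i0
  have eF1 := condexp_const_mul_apply μ (𝓕 n) ((4 + ρ) * a ^ 2)
    (fun ω => ‖A n ω - T (X n ω)‖ ^ 2)
  have eF2 := condexp_const_mul_apply μ (𝓕 n) (4 * a ^ 2)
    (fun ω => ‖B n ω - T (Y n ω)‖ ^ 2)
  have eF3 := condexp_const_mul_apply μ (𝓕 n) (2 * a)
    (fun ω => ⟪B n ω - T (Y n ω), projS (X n ω) - Y n ω⟫)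
  have eRHS := condexp_comb4 μ (𝓕 n) i0 i1 i2 i3
  -- the master conditional inequality
  have hmain : ∀ᵐ ω ∂μ,
      condExp (𝓕 n) μ (fun ω' => ‖projS (X (n + 1) ω') - X (n + 1) ω'‖ ^ 2) ω
        ≤ ‖X n ω - projS (X n ω)‖ ^ 2
          - ρ / 2 * ‖X n ω - proj (X n ω - a • T (X n ω))‖ ^ 2
          + ((4 + ρ) * a ^ 2) * condExp (𝓕 n) μ (fun ω' => ‖A n ω' - T (X n ω')‖ ^ 2) ω
          + (4 * a ^ 2) * condExp (𝓕 n) μ (fun ω' => ‖B n ω' - T (Y n ω')‖ ^ 2) ω := by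
    have hfg : ∀ ω, ‖projS (X (n + 1) ω) - X (n + 1) ω‖ ^ 2
        ≤ ‖X (n + 1) ω - projS (X n ω)‖ ^ 2 := by
      intro ω
      exact pow_le_pow_left₀ (norm_nonneg _)
        (hdistS (X (n + 1) ω) (projS (X n ω)) (hprojS_mem (X n ω))) 2
    have m1le := condExp_mono (m := 𝓕 n) If Ig (ae_of_all _ hfg)
    have m2le := condExp_mono (m := 𝓕 n) Ig iRHS (ae_of_all _ hdet)
    filter_upwards [m1le, m2le, eRHS, eF1, eF2, eF3, hcross0] with ω b1 b2 b3 b4 b5 b6 b7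
    have b8 := congrFun eF0 ω
    simp only [Pi.zero_apply] at b7
    rw [b3, b4, b5, b6, b8, b7, mul_zero] at b2
    linarith
  -- the Z-noise bound transported to the smaller sigma-algebra
  have hGZ1bd : condExp (𝓕 n) μ (fun ω' => ‖B n ω' - T (Y n ω')‖ ^ 2)
      ≤ᵐ[μ] fun ω =>
        2 * (θZ (projS (X n ω)) + c * σ₀ * (1 + a * L) * ‖X n ω - projS (X n ω)‖) ^ 2
          + (2 * (c * σ₀ * a) ^ 2) * condExp (𝓕 n) μ (fun ω' => ‖A n ω' - T (X n ω')‖ ^ 2) ω := by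
    have htow : condExp (𝓕 n) μ (fun ω' => ‖B n ω' - T (Y n ω')‖ ^ 2)
        =ᵐ[μ] condExp (𝓕 n) μ (condExp (𝓕hat n) μ (fun ω' => ‖B n ω' - T (Y n ω')‖ ^ 2)) :=
      (condExp_condExp_of_le (m₁ := 𝓕 n) (m₂ := 𝓕hat n) hm12 hm2).symm
    have hmono1 : condExp (𝓕 n) μ (condExp (𝓕hat n) μ (fun ω' => ‖B n ω' - T (Y n ω')‖ ^ 2))
        ≤ᵐ[μ] condExp (𝓕 n) μ (fun ω =>
          (θZ (projS (X n ω)) + c * σ₀ * ‖Y n ω - projS (X n ω)‖) ^ 2) :=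
      condExp_mono (m := 𝓕 n) integrable_condExp iq' hGZ2bd
    have hmono2 : condExp (𝓕 n) μ
        (fun ω => (θZ (projS (X n ω)) + c * σ₀ * ‖Y n ω - projS (X n ω)‖) ^ 2)
        ≤ᵐ[μ] condExp (𝓕 n) μ (fun ω =>
          2 * (θZ (projS (X n ω)) + c * σ₀ * (1 + a * L) * ‖X n ω - projS (X n ω)‖) ^ 2
            + (2 * (c * σ₀ * a) ^ 2) * ‖A n ω - T (X n ω)‖ ^ 2) :=
      condExp_mono (m := 𝓕 n) iq' iqt (ae_of_all _ hq'qt)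
    have heq : condExp (𝓕 n) μ (fun ω =>
          2 * (θZ (projS (X n ω)) + c * σ₀ * (1 + a * L) * ‖X n ω - projS (X n ω)‖) ^ 2
            + (2 * (c * σ₀ * a) ^ 2) * ‖A n ω - T (X n ω)‖ ^ 2)
        =ᵐ[μ] fun ω =>
          2 * (θZ (projS (X n ω)) + c * σ₀ * (1 + a * L) * ‖X n ω - projS (X n ω)‖) ^ 2
            + (2 * (c * σ₀ * a) ^ 2) * condExp (𝓕 n) μ (fun ω' => ‖A n ω' - T (X n ω')‖ ^ 2) ω := by
      refine (condexp_add_apply μ (𝓕 n) (iu2.const_mul 2)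
        (iW2.const_mul (2 * (c * σ₀ * a) ^ 2))).trans ?_
      have h2u : condExp (𝓕 n) μ (fun ω =>
          2 * (θZ (projS (X n ω)) + c * σ₀ * (1 + a * L) * ‖X n ω - projS (X n ω)‖) ^ 2)
          = fun ω => 2 * (θZ (projS (X n ω)) + c * σ₀ * (1 + a * L) * ‖X n ω - projS (X n ω)‖) ^ 2 :=
        condExp_of_stronglyMeasurable hm1 (stronglyMeasurable_const.mul (sm_u.pow 2))
          (iu2.const_mul 2)
      have hWc := condexp_const_mul_apply μ (𝓕 n) (2 * (c * σ₀ * a) ^ 2)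
        (fun ω => ‖A n ω - T (X n ω)‖ ^ 2)
      filter_upwards [hWc] with ω e5
      have e6 := congrFun h2u ω
      rw [e6, e5]
    exact htow.le.trans (hmono1.trans (hmono2.trans heq.le))
  -- final pointwise assembly
  filter_upwards [hmain, hGZ1bd, hGWbd] with ω h1 h2 h3
  rw [norm_sub_rev (projS (X n ω)) (X n ω)]
  have hD0 : (0:ℝ) ≤ ‖X n ω - projS (X n ω)‖ := norm_nonneg _
  have hσV : σ (projS (X n ω)) ≤ max (σ (projS (X n ω))) σ₀ := le_max_left _ _
  have hσ0M : σ₀ ≤ max (σ (projS (X n ω))) σ₀ := le_max_right _ _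
  have hM0 : (0:ℝ) ≤ max (σ (projS (X n ω))) σ₀ := le_trans hσ₀ hσ0M
  have htWM : θW (projS (X n ω)) ≤ c * max (σ (projS (X n ω))) σ₀ :=
    le_trans (θWle _ (hprojS_mem (X n ω))) (mul_le_mul_of_nonneg_left hσV hc0.le)
  have htZM : θZ (projS (X n ω)) ≤ c * max (σ (projS (X n ω))) σ₀ :=
    le_trans (θZle _ (hprojS_mem (X n ω))) (mul_le_mul_of_nonneg_left hσV hc0.le)
  have htW0 : 0 ≤ θW (projS (X n ω)) := θW0 _
  have htZ0 : 0 ≤ θZ (projS (X n ω)) := θZ0 _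
  have hal0 : (0:ℝ) ≤ 1 + a * L := add_nonneg zero_le_one (mul_nonneg ha0.le hL.le)
  have s1 : θW (projS (X n ω)) + c * σ₀ * ‖X n ω - projS (X n ω)‖ ≤ c * max (σ (projS (X n ω))) σ₀ * (1 + ‖X n ω - projS (X n ω)‖) := by
    linarith only [htWM,
      mul_le_mul_of_nonneg_right (mul_le_mul_of_nonneg_left hσ0M hc0.le) hD0]
  have s1' : 0 ≤ θW (projS (X n ω)) + c * σ₀ * ‖X n ω - projS (X n ω)‖ := by
    have h9 : 0 ≤ c * σ₀ * ‖X n ω - projS (X n ω)‖ := by positivity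
    linarith only [htW0, h9]
  have s2 : condExp (𝓕 n) μ (fun ω' => ‖A n ω' - T (X n ω')‖ ^ 2) ω ≤ 2 * (c * max (σ (projS (X n ω))) σ₀) ^ 2 * (1 + ‖X n ω - projS (X n ω)‖ ^ 2) := by
    exact h3.trans (arithB _ _ _ s1 s1' (mul_nonneg hc0.le hM0))
  have s3' : 0 ≤ θZ (projS (X n ω)) + c * σ₀ * (1 + a * L) * ‖X n ω - projS (X n ω)‖ := hu0 ω
  have s3 : θZ (projS (X n ω)) + c * σ₀ * (1 + a * L) * ‖X n ω - projS (X n ω)‖ ≤ c * max (σ (projS (X n ω))) σ₀ * (1 + a * L) * (1 + ‖X n ω - projS (X n ω)‖) := by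
    linarith only [htZM,
      mul_le_mul_of_nonneg_right (mul_le_mul_of_nonneg_left hσ0M hc0.le)
        (mul_nonneg hal0 hD0),
      mul_nonneg (mul_nonneg (mul_nonneg hc0.le hM0) (mul_nonneg ha0.le hL.le)) hD0,
      mul_nonneg (mul_nonneg hc0.le hM0) (mul_nonneg ha0.le hL.le)]
  have s4 : (θZ (projS (X n ω)) + c * σ₀ * (1 + a * L) * ‖X n ω - projS (X n ω)‖) ^ 2
      ≤ 2 * (c * max (σ (projS (X n ω))) σ₀ * (1 + a * L)) ^ 2 * (1 + ‖X n ω - projS (X n ω)‖ ^ 2) := by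
    exact arithB _ _ _ s3 s3' (mul_nonneg (mul_nonneg hc0.le hM0) hal0)
  have s5 : condExp (𝓕 n) μ (fun ω' => ‖B n ω' - T (Y n ω')‖ ^ 2) ω ≤ 2 * (2 * (c * max (σ (projS (X n ω))) σ₀ * (1 + a * L)) ^ 2 * (1 + ‖X n ω - projS (X n ω)‖ ^ 2))
      + (2 * (c * σ₀ * a) ^ 2) * (2 * (c * max (σ (projS (X n ω))) σ₀) ^ 2 * (1 + ‖X n ω - projS (X n ω)‖ ^ 2)) := by
    linarith only [h2, s4, mul_le_mul_of_nonneg_left s2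
      (by positivity : (0:ℝ) ≤ 2 * (c * σ₀ * a) ^ 2)]
  have hfinal : ((4 + ρ) * a ^ 2) * condExp (𝓕 n) μ (fun ω' => ‖A n ω' - T (X n ω')‖ ^ 2) ω + (4 * a ^ 2) * condExp (𝓕 n) μ (fun ω' => ‖B n ω' - T (Y n ω')‖ ^ 2) ω
      ≤ a ^ 2 * C₂ ^ 2 * (2 * (4 + ρ) + 16 * (1 + a * L + a * σ₀ * c) ^ 2)
          * max (σ (projS (X n ω))) σ₀ ^ 2 / (mb (n + 1)) * (1 + ‖X n ω - projS (X n ω)‖ ^ 2) := by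
    have e1 : a ^ 2 * C₂ ^ 2 * (2 * (4 + ρ) + 16 * (1 + a * L + a * σ₀ * c) ^ 2)
          * max (σ (projS (X n ω))) σ₀ ^ 2 / (mb (n + 1)) * (1 + ‖X n ω - projS (X n ω)‖ ^ 2)
        = a ^ 2 * c ^ 2 * (2 * (4 + ρ) + 16 * (1 + a * L + a * σ₀ * c) ^ 2)
          * max (σ (projS (X n ω))) σ₀ ^ 2 * (1 + ‖X n ω - projS (X n ω)‖ ^ 2) := by
      rw [hc2]
      field_simp
    rw [e1]
    have c1 : ((4 + ρ) * a ^ 2) * condExp (𝓕 n) μ (fun ω' => ‖A n ω' - T (X n ω')‖ ^ 2) ω ≤ (4 + ρ) * a ^ 2 * (2 * (c * max (σ (projS (X n ω))) σ₀) ^ 2 * (1 + ‖X n ω - projS (X n ω)‖ ^ 2)) :=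
      mul_le_mul_of_nonneg_left s2 (by nlinarith [sq_nonneg a, hρ0.le] : (0:ℝ) ≤ (4 + ρ) * a ^ 2)
    have c2 : (4 * a ^ 2) * condExp (𝓕 n) μ (fun ω' => ‖B n ω' - T (Y n ω')‖ ^ 2) ω ≤ 4 * a ^ 2 * (2 * (2 * (c * max (σ (projS (X n ω))) σ₀ * (1 + a * L)) ^ 2 * (1 + ‖X n ω - projS (X n ω)‖ ^ 2))
        + (2 * (c * σ₀ * a) ^ 2) * (2 * (c * max (σ (projS (X n ω))) σ₀) ^ 2 * (1 + ‖X n ω - projS (X n ω)‖ ^ 2))) :=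
      mul_le_mul_of_nonneg_left s5 (by positivity)
    have hks : 16 * ((1 + a * L) ^ 2 + (a * σ₀ * c) ^ 2)
        ≤ 16 * (1 + a * L + a * σ₀ * c) ^ 2 := by
      exact arithC _ _ hal0 (mul_nonneg (mul_nonneg ha0.le hσ₀) hc0.le)
    have hq0 : (0:ℝ) ≤ a ^ 2 * c ^ 2 * max (σ (projS (X n ω))) σ₀ ^ 2 * (1 + ‖X n ω - projS (X n ω)‖ ^ 2) := by positivity
    linarith only [c1, c2, mul_le_mul_of_nonneg_left hks hq0]
  linarith only [h1, hfinal]
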